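/- (2D-SC hypergraph product codes are stabilizer codes.) Let A(U,V) and B(U,V) be polynomial matrices in two indeterminates with F₂-coefficients of sizes r₁×n₁ and r₂×n₂, with maximal degrees m₁ in U and m₂ in V, and let Ā(U,V) = U^{m₁}V^{m₂}A(U⁻¹,V⁻¹), B̄(U,V) = U^{m₁}V^{m₂}B(U⁻¹,V⁻¹). Define the block matrix F(U,V) = [[X·(I_{n₂} ⊗ A(U,V)), X·(B̄(U,V)ᵀ ⊗ I_{r₁})], [Z·(B(U,V) ⊗ I_{n₁}), Z·(I_{r₂} ⊗ Ā(U,V)ᵀ)]], where multiplication by the symbol X (resp. Z) means each F₂ polynomial coefficient 1 is replaced by X (resp. Z). Then ⟨F(U,V), F(U⁻¹,V⁻¹)⟩_s = 0 as an (r₁n₂+r₂n₁)×(r₁n₂+r₂n₁) F₂-matrix polynomial. -/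

import Mathlib

open Matrix Finset

abbrev Pauli := ZMod 2 × ZMod 2

/-- Symplectic inner product of two Pauli rows indexed by a finite type. -/
def sympRow {α : Type*} [Fintype α] (p q : α → Pauli) : ZMod 2 :=
  ∑ k, ((p k).1 * (q k).2 + (p k).2 * (q k).1)

/-- The coefficient at `U^kV^l` of the characteristic function of the 2D-SC hypergraph
product code built from `F₂`-polynomial matrices `A` and `B`:
`F(U,V) = [[X(I_{n₂}⊗A), X(B̄ᵀ⊗I_{r₁})], [Z(B⊗I_{n₁}), Z(I_{r₂}⊗Āᵀ)]]`,
with `Ā k l = A (m₁-k) (m₂-l)` and `B̄ k l = B (m₁-k) (m₂-l)`.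
X-type entries sit in the first `F₂` component, Z-type in the second. -/
def Fhgp (m₁ m₂ : ℕ) {r₁ n₁ r₂ n₂ : ℕ}
    (A : ℤ → ℤ → Matrix (Fin r₁) (Fin n₁) (ZMod 2))
    (B : ℤ → ℤ → Matrix (Fin r₂) (Fin n₂) (ZMod 2)) (k l : ℤ)
    (ρ : (Fin n₂ × Fin r₁) ⊕ (Fin r₂ × Fin n₁))
    (q : (Fin n₂ × Fin n₁) ⊕ (Fin r₂ × Fin r₁)) : Pauli :=
  match ρ, q with
  | Sum.inl (c, i), Sum.inl (c', j) => if c = c' then (A k l i j, 0) else 0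
  | Sum.inl (c, i), Sum.inr (t, i') => if i = i' then (B ((m₁ : ℤ) - k) ((m₂ : ℤ) - l) t c, 0) else 0
  | Sum.inr (t, j), Sum.inl (c, j') => if j = j' then (0, B k l t c) else 0
  | Sum.inr (t, j), Sum.inr (t', i) =>
      if t = t' then (0, A ((m₁ : ℤ) - k) ((m₂ : ℤ) - l) i j) else 0

section Aux

lemma sympRow_ll (m₁ m₂ r₁ n₁ r₂ n₂ : ℕ)
    (A : ℤ → ℤ → Matrix (Fin r₁) (Fin n₁) (ZMod 2))
    (B : ℤ → ℤ → Matrix (Fin r₂) (Fin n₂) (ZMod 2)) (k l k' l' : ℤ)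
    (x y : Fin n₂ × Fin r₁) :
    sympRow (Fhgp m₁ m₂ A B k l (Sum.inl x)) (Fhgp m₁ m₂ A B k' l' (Sum.inl y)) = 0 := by
  obtain ⟨c,i⟩ := x; obtain ⟨c',i'⟩ := y
  simp [sympRow, Fhgp, apply_ite Prod.fst, apply_ite Prod.snd]

lemma sympRow_rr (m₁ m₂ r₁ n₁ r₂ n₂ : ℕ)
    (A : ℤ → ℤ → Matrix (Fin r₁) (Fin n₁) (ZMod 2))
    (B : ℤ → ℤ → Matrix (Fin r₂) (Fin n₂) (ZMod 2)) (k l k' l' : ℤ)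
    (x y : Fin r₂ × Fin n₁) :
    sympRow (Fhgp m₁ m₂ A B k l (Sum.inr x)) (Fhgp m₁ m₂ A B k' l' (Sum.inr y)) = 0 := by
  obtain ⟨c,i⟩ := x; obtain ⟨c',i'⟩ := y
  simp [sympRow, Fhgp, apply_ite Prod.fst, apply_ite Prod.snd]

lemma sympRow_lr (m₁ m₂ r₁ n₁ r₂ n₂ : ℕ)
    (A : ℤ → ℤ → Matrix (Fin r₁) (Fin n₁) (ZMod 2))
    (B : ℤ → ℤ → Matrix (Fin r₂) (Fin n₂) (ZMod 2)) (k l k' l' : ℤ)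
    (c : Fin n₂) (i : Fin r₁) (t : Fin r₂) (j : Fin n₁) :
    sympRow (Fhgp m₁ m₂ A B k l (Sum.inl (c,i))) (Fhgp m₁ m₂ A B k' l' (Sum.inr (t,j)))
    = A k l i j * B k' l' t c + B ((m₁:ℤ)-k) ((m₂:ℤ)-l) t c * A ((m₁:ℤ)-k') ((m₂:ℤ)-l') i j := by
  simp [sympRow, Fhgp, Fintype.sum_sum_type, Fintype.sum_prod_type, apply_ite Prod.fst,
    apply_ite Prod.snd, ite_mul, mul_ite, Finset.sum_ite_eq, Finset.sum_ite_eq']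

lemma sympRow_rl (m₁ m₂ r₁ n₁ r₂ n₂ : ℕ)
    (A : ℤ → ℤ → Matrix (Fin r₁) (Fin n₁) (ZMod 2))
    (B : ℤ → ℤ → Matrix (Fin r₂) (Fin n₂) (ZMod 2)) (k l k' l' : ℤ)
    (c : Fin n₂) (i : Fin r₁) (t : Fin r₂) (j : Fin n₁) :
    sympRow (Fhgp m₁ m₂ A B k l (Sum.inr (t,j))) (Fhgp m₁ m₂ A B k' l' (Sum.inl (c,i)))
    = B k l t c * A k' l' i j + A ((m₁:ℤ)-k) ((m₂:ℤ)-l) i j * B ((m₁:ℤ)-k') ((m₂:ℤ)-l') t c := by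
  simp [sympRow, Fhgp, Fintype.sum_sum_type, Fintype.sum_prod_type, apply_ite Prod.fst,
    apply_ite Prod.snd, ite_mul, mul_ite, Finset.sum_ite_eq, Finset.sum_ite_eq']

lemma scHGP_refl2 (m₁ m₂ : ℕ) (h : ℤ → ℤ → ZMod 2) :
    ∑ k ∈ Icc (0:ℤ) (m₁:ℤ), ∑ l ∈ Icc (0:ℤ) (m₂:ℤ), h ((m₁:ℤ)-k) ((m₂:ℤ)-l)
    = ∑ k ∈ Icc (0:ℤ) (m₁:ℤ), ∑ l ∈ Icc (0:ℤ) (m₂:ℤ), h k l := by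
  rw [← Finset.sum_product', ← Finset.sum_product']
  apply Finset.sum_nbij' (i := fun p => ((m₁:ℤ)-p.1, (m₂:ℤ)-p.2))
    (j := fun p => ((m₁:ℤ)-p.1, (m₂:ℤ)-p.2)) <;>
    simp_all [Finset.mem_Icc, Prod.forall] <;> omega

lemma scHGP_key (m₁ m₂ : ℕ) (d₁ d₂ : ℤ) (f g : ℤ → ℤ → ZMod 2)
    (hf : ∀ i j : ℤ, (i < 0 ∨ (m₁ : ℤ) < i ∨ j < 0 ∨ (m₂ : ℤ) < j) → f i j = 0)
    (hg : ∀ i j : ℤ, (i < 0 ∨ (m₁ : ℤ) < i ∨ j < 0 ∨ (m₂ : ℤ) < j) → g i j = 0) :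
    ∑ k ∈ Icc (0:ℤ) (m₁:ℤ), ∑ l ∈ Icc (0:ℤ) (m₂:ℤ), f k l * g (k+d₁) (l+d₂)
    = ∑ k ∈ Icc (0:ℤ) (m₁:ℤ), ∑ l ∈ Icc (0:ℤ) (m₂:ℤ), f (k-d₁) (l-d₂) * g k l := by
  rw [← Finset.sum_product', ← Finset.sum_product']
  rw [← Finset.sum_filter_of_ne
    (p := fun p : ℤ × ℤ => 0 ≤ p.1+d₁ ∧ p.1+d₁ ≤ (m₁:ℤ) ∧ 0 ≤ p.2+d₂ ∧ p.2+d₂ ≤ (m₂:ℤ))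
    (by intro p _ hne; by_contra hc
        exact hne (by rw [hg (p.1+d₁) (p.2+d₂) (by omega), mul_zero]))]
  conv_rhs => rw [← Finset.sum_filter_of_ne
    (p := fun p : ℤ × ℤ => 0 ≤ p.1-d₁ ∧ p.1-d₁ ≤ (m₁:ℤ) ∧ 0 ≤ p.2-d₂ ∧ p.2-d₂ ≤ (m₂:ℤ))
    (by intro p _ hne; by_contra hc
        exact hne (by rw [hf (p.1-d₁) (p.2-d₂) (by omega), zero_mul]))]
  apply Finset.sum_nbij' (i := fun p => (p.1+d₁, p.2+d₂)) (j := fun p => (p.1-d₁, p.2-d₂))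
  · intro p hp; simp only [Finset.mem_filter, Finset.mem_product, Finset.mem_Icc] at *
    exact ⟨⟨by omega, by omega⟩, by omega⟩
  · intro p hp; simp only [Finset.mem_filter, Finset.mem_product, Finset.mem_Icc] at *
    exact ⟨⟨by omega, by omega⟩, by omega⟩
  · intro p hp; simp
  · intro p hp; simp
  · intro p hp; simp only []; ring_nf

end Aux

/-- 2D-SC hypergraph product codes are stabilizer codes:
every coefficient of `⟨F(U,V), F(U⁻¹,V⁻¹)⟩_s` is the zero matrix. -/
theorem scHGP_stabilizer (m₁ m₂ r₁ n₁ r₂ n₂ : ℕ)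
    (A : ℤ → ℤ → Matrix (Fin r₁) (Fin n₁) (ZMod 2))
    (B : ℤ → ℤ → Matrix (Fin r₂) (Fin n₂) (ZMod 2))
    (hA : ∀ i j : ℤ, (i < 0 ∨ (m₁ : ℤ) < i ∨ j < 0 ∨ (m₂ : ℤ) < j) → A i j = 0)
    (hB : ∀ i j : ℤ, (i < 0 ∨ (m₁ : ℤ) < i ∨ j < 0 ∨ (m₂ : ℤ) < j) → B i j = 0) :
    ∀ (d₁ d₂ : ℤ) (ρ ρ' : (Fin n₂ × Fin r₁) ⊕ (Fin r₂ × Fin n₁)),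
      ∑ k ∈ Finset.Icc (0 : ℤ) (m₁ : ℤ), ∑ l ∈ Finset.Icc (0 : ℤ) (m₂ : ℤ),
        sympRow (Fhgp m₁ m₂ A B k l ρ) (Fhgp m₁ m₂ A B (k + d₁) (l + d₂) ρ') = 0 := by
  intro d₁ d₂ ρ ρ'
  have h2 : ∀ x : ZMod 2, x + x = 0 := by decide
  rcases ρ with ⟨c, i⟩ | ⟨t, j⟩ <;> rcases ρ' with ⟨c', i'⟩ | ⟨t', j'⟩
  · simp [sympRow_ll]
  · -- inl / inr
    set f : ℤ → ℤ → ZMod 2 := fun k l => A k l i j' with hfdef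
    set g : ℤ → ℤ → ZMod 2 := fun k l => B k l t' c with hgdef
    have hf : ∀ a b : ℤ, (a < 0 ∨ (m₁:ℤ) < a ∨ b < 0 ∨ (m₂:ℤ) < b) → f a b = 0 := by
      intro a b h; simp [hfdef, hA a b h]
    have hg : ∀ a b : ℤ, (a < 0 ∨ (m₁:ℤ) < a ∨ b < 0 ∨ (m₂:ℤ) < b) → g a b = 0 := by
      intro a b h; simp [hgdef, hB a b h]
    have e1 : ∀ k l : ℤ,
        sympRow (Fhgp m₁ m₂ A B k l (Sum.inl (c, i))) (Fhgp m₁ m₂ A B (k + d₁) (l + d₂) (Sum.inr (t', j')))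
        = f k l * g (k + d₁) (l + d₂) + g ((m₁:ℤ) - k) ((m₂:ℤ) - l) * f ((m₁:ℤ) - k - d₁) ((m₂:ℤ) - l - d₂) := by
      intro k l
      rw [sympRow_lr, show (m₁:ℤ) - (k + d₁) = (m₁:ℤ) - k - d₁ by ring,
        show (m₂:ℤ) - (l + d₂) = (m₂:ℤ) - l - d₂ by ring]
    simp only [e1, Finset.sum_add_distrib]
    rw [scHGP_refl2 m₁ m₂ (fun k l => g k l * f (k - d₁) (l - d₂))]
    rw [scHGP_key m₁ m₂ d₁ d₂ f g hf hg]
    have e2 : ∀ k l : ℤ, g k l * f (k - d₁) (l - d₂) = f (k - d₁) (l - d₂) * g k l :=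
      fun _ _ => mul_comm _ _
    simp only [e2]
    exact h2 _
  · -- inr / inl
    set f : ℤ → ℤ → ZMod 2 := fun k l => A k l i' j with hfdef
    set g : ℤ → ℤ → ZMod 2 := fun k l => B k l t c' with hgdef
    have hf : ∀ a b : ℤ, (a < 0 ∨ (m₁:ℤ) < a ∨ b < 0 ∨ (m₂:ℤ) < b) → f a b = 0 := by
      intro a b h; simp [hfdef, hA a b h]
    have hg : ∀ a b : ℤ, (a < 0 ∨ (m₁:ℤ) < a ∨ b < 0 ∨ (m₂:ℤ) < b) → g a b = 0 := by
      intro a b h; simp [hgdef, hB a b h]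
    have e1 : ∀ k l : ℤ,
        sympRow (Fhgp m₁ m₂ A B k l (Sum.inr (t, j))) (Fhgp m₁ m₂ A B (k + d₁) (l + d₂) (Sum.inl (c', i')))
        = g k l * f (k + d₁) (l + d₂) + f ((m₁:ℤ) - k) ((m₂:ℤ) - l) * g ((m₁:ℤ) - k - d₁) ((m₂:ℤ) - l - d₂) := by
      intro k l
      rw [sympRow_rl, show (m₁:ℤ) - (k + d₁) = (m₁:ℤ) - k - d₁ by ring,
        show (m₂:ℤ) - (l + d₂) = (m₂:ℤ) - l - d₂ by ring]
    simp only [e1, Finset.sum_add_distrib]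
    rw [scHGP_refl2 m₁ m₂ (fun k l => f k l * g (k - d₁) (l - d₂))]
    rw [scHGP_key m₁ m₂ d₁ d₂ g f hg hf]
    have e2 : ∀ k l : ℤ, f k l * g (k - d₁) (l - d₂) = g (k - d₁) (l - d₂) * f k l :=
      fun _ _ => mul_comm _ _
    simp only [e2]
    exact h2 _
  · simp [sympRow_rr]
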